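/- Let P be a ℚ-vector space, V = P ⊗_ℚ ℝ, and C a cone in P. Then the real cone Cone_ℝ(C) generated by C in V satisfies Cone_ℝ(C) ∩ P = C, where P is identified with its image in V. -/

import Mathlib

open TensorProduct

/-- `C` is a cone: closed under addition and multiplication by positive scalars. -/
def IsCone (K : Type*) [Field K] [LinearOrder K] [IsStrictOrderedRing K] {V : Type*} [AddCommGroup V]
    [Module K V] (C : Set V) : Prop :=
  (∀ x ∈ C, ∀ y ∈ C, x + y ∈ C) ∧ ∀ x ∈ C, ∀ l : K, 0 < l → l • x ∈ C

/-- The cone generated by `S`: positive linear combinations of elements of `S`. -/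
def coneGen (K : Type*) [Field K] [LinearOrder K] [IsStrictOrderedRing K] {V : Type*} [AddCommGroup V]
    [Module K V] (S : Set V) : Set V :=
  { v | ∃ (n : ℕ) (a : Fin (n + 1) → V) (l : Fin (n + 1) → K),
      (∀ i, a i ∈ S) ∧ (∀ i, 0 < l i) ∧ v = ∑ i, l i • a i }

private lemma isCone_sum {P : Type*} [AddCommGroup P] [Module ℚ P] {C : Set P}
    (hC : IsCone ℚ C) :
    ∀ (n : ℕ) (c : Fin (n + 1) → P) (q : Fin (n + 1) → ℚ),
      (∀ i, c i ∈ C) → (∀ i, 0 < q i) → (∑ i, q i • c i) ∈ C := by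
  intro n
  induction n with
  | zero =>
    intro c q hc hq
    simpa using hC.2 _ (hc 0) _ (hq 0)
  | succ m ih =>
    intro c q hc hq
    rw [Fin.sum_univ_castSucc]
    exact hC.1 _ (ih _ _ (fun i => hc _) (fun i => hq _)) _ (hC.2 _ (hc _) _ (hq _))

theorem coneGenReal_inter_rational (P : Type*) [AddCommGroup P] [Module ℚ P]
    (C : Set P) (hC : IsCone ℚ C) :
    coneGen ℝ ((fun p : P => ((1 : ℝ) ⊗ₜ[ℚ] p : ℝ ⊗[ℚ] P)) '' C) ∩
        Set.range (fun p : P => ((1 : ℝ) ⊗ₜ[ℚ] p : ℝ ⊗[ℚ] P))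
      = (fun p : P => ((1 : ℝ) ⊗ₜ[ℚ] p : ℝ ⊗[ℚ] P)) '' C := by
  classical
  apply Set.Subset.antisymm
  · rintro v ⟨⟨n, a, l, ha, hl, hv⟩, p, hp⟩
    choose c hcC hce using ha
    set B := Module.Basis.ofVectorSpace ℚ ℝ with hB
    set ψ : ↥(Module.Basis.ofVectorSpaceIndex ℚ ℝ) → (ℝ ⊗[ℚ] P →ₗ[ℚ] P) :=
      fun b => TensorProduct.lift ((LinearMap.lsmul ℚ P).comp (B.coord b)) with hψ
    have hψ_tmul : ∀ b (r : ℝ) (x : P), ψ b (r ⊗ₜ[ℚ] x) = B.repr r b • x := by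
      intro b r x
      simp [hψ, TensorProduct.lift.tmul, Module.Basis.coord_apply]
    have h1 : (∑ i, l i • a i) = (1 : ℝ) ⊗ₜ[ℚ] p := by rw [← hv, ← hp]
    have key : ∀ b, ∑ i, B.repr (l i) b • c i = B.repr 1 b • p := by
      intro b
      have h2 := congrArg (ψ b) h1
      rw [map_sum, hψ_tmul] at h2
      have h3 : ∀ i, ψ b (l i • a i) = B.repr (l i) b • c i := by
        intro i
        rw [← hce i]
        show ψ b (l i • ((1 : ℝ) ⊗ₜ[ℚ] c i)) = _
        rw [TensorProduct.smul_tmul', smul_eq_mul, mul_one, hψ_tmul]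
      simpa only [h3] using h2
    set S : Finset ↥(Module.Basis.ofVectorSpaceIndex ℚ ℝ) :=
      (B.repr 1).support ∪ Finset.univ.biUnion (fun i => (B.repr (l i)).support) with hS
    have hsub1 : (B.repr 1).support ⊆ S := Finset.subset_union_left
    have hsubl : ∀ i, (B.repr (l i)).support ⊆ S := by
      intro i
      rw [hS]
      exact (Finset.subset_biUnion_of_mem (fun j => (B.repr (l j)).support)
        (Finset.mem_univ i)).trans Finset.subset_union_right
    have hrec : ∀ x : ℝ, (B.repr x).support ⊆ S →
        x = ∑ b ∈ S, (B.repr x b : ℝ) * (b : ℝ) := by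
      intro x hsubx
      conv_lhs => rw [← B.linearCombination_repr x]
      rw [Finsupp.linearCombination_apply,
        Finsupp.sum_of_support_subset _ hsubx _ (by simp)]
      refine Finset.sum_congr rfl fun b _ => ?_
      rw [hB, Module.Basis.ofVectorSpace_apply_self, Rat.smul_def]
    -- constants
    set K1 : ℝ := ∑ b ∈ S, |(B.repr 1 b : ℝ)| with hK1
    set Ki : Fin (n + 1) → ℝ := fun i => ∑ b ∈ S, |(B.repr (l i) b : ℝ)| with hKi
    set K : ℝ := K1 + ∑ i, Ki i with hKdef
    have hK1nonneg : 0 ≤ K1 := Finset.sum_nonneg fun _ _ => abs_nonneg _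
    have hKinonneg : ∀ i, 0 ≤ Ki i := fun i => Finset.sum_nonneg fun _ _ => abs_nonneg _
    have hK1le : K1 ≤ K := le_add_of_nonneg_right (Finset.sum_nonneg fun i _ => hKinonneg i)
    have hKile : ∀ i, Ki i ≤ K := fun i =>
      le_add_of_nonneg_left hK1nonneg |>.trans' (Finset.single_le_sum (fun j _ => hKinonneg j) (Finset.mem_univ i))
    have hK0 : 0 ≤ K := hK1nonneg.trans hK1le
    set δ : ℝ := min 1 (Finset.univ.inf' Finset.univ_nonempty l) with hδdef
    have hδpos : 0 < δ := lt_min one_pos (by rw [Finset.lt_inf'_iff]; exact fun i _ => hl i)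
    have hδ1 : δ ≤ 1 := min_le_left _ _
    have hδl : ∀ i, δ ≤ l i := fun i =>
      (min_le_right _ _).trans (Finset.inf'_le _ (Finset.mem_univ i))
    set ε : ℝ := δ / (K + 1) with hεdef
    have hεpos : 0 < ε := div_pos hδpos (by linarith)
    have hεK : ∀ K' : ℝ, K' ≤ K → ε * K' < δ := by
      intro K' hK'
      have h : ε * (K + 1) = δ := div_mul_cancel₀ _ (by linarith)
      have : ε * K' ≤ ε * K := by
        exact mul_le_mul_of_nonneg_left hK' hεpos.le
      nlinarith
    choose r hr using fun b : ↥(Module.Basis.ofVectorSpaceIndex ℚ ℝ) => exists_rat_near (b : ℝ) hεpos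
    set q : Fin (n + 1) → ℚ := fun i => ∑ b ∈ S, B.repr (l i) b * r b with hqdef
    set μ : ℚ := ∑ b ∈ S, B.repr 1 b * r b with hμdef
    have happrox : ∀ x : ℝ, (B.repr x).support ⊆ S →
        |x - ((∑ b ∈ S, B.repr x b * r b : ℚ) : ℝ)| ≤ ε * ∑ b ∈ S, |(B.repr x b : ℝ)| := by
      intro x hsubx
      have hx := hrec x hsubx
      push_cast
      have h1 : x - ∑ b ∈ S, (B.repr x b : ℝ) * (r b : ℝ)
          = ∑ b ∈ S, (B.repr x b : ℝ) * ((b : ℝ) - (r b : ℝ)) := by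
        nth_rewrite 1 [hx]
        rw [← Finset.sum_sub_distrib]
        exact Finset.sum_congr rfl fun b _ => by ring
      rw [h1]
      calc |∑ b ∈ S, (B.repr x b : ℝ) * ((b : ℝ) - (r b : ℝ))|
          ≤ ∑ b ∈ S, |(B.repr x b : ℝ) * ((b : ℝ) - (r b : ℝ))| :=
            Finset.abs_sum_le_sum_abs _ _
        _ ≤ ∑ b ∈ S, |(B.repr x b : ℝ)| * ε := by
            refine Finset.sum_le_sum fun b _ => ?_
            rw [abs_mul]
            exact mul_le_mul_of_nonneg_left (hr b).le (abs_nonneg _)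
        _ = ε * ∑ b ∈ S, |(B.repr x b : ℝ)| := by rw [← Finset.sum_mul, mul_comm]
    have hqpos : ∀ i, 0 < q i := by
      intro i
      have h := (happrox (l i) (hsubl i)).trans_lt (hεK _ (hKile i))
      rw [abs_lt] at h
      have : (0 : ℝ) < (q i : ℝ) := by
        have := hδl i
        linarith [h.1]
      exact_mod_cast this
    have hμpos : 0 < μ := by
      have h := (happrox 1 hsub1).trans_lt (hεK _ hK1le)
      rw [abs_lt] at h
      have : (0 : ℝ) < (μ : ℝ) := by linarith [h.1]
      exact_mod_cast this
    have hsum : ∑ i, q i • c i = μ • p := by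
      calc ∑ i, q i • c i
          = ∑ i, ∑ b ∈ S, (B.repr (l i) b * r b) • c i := by
            refine Finset.sum_congr rfl fun i _ => ?_
            rw [hqdef]
            exact Finset.sum_smul
        _ = ∑ b ∈ S, ∑ i, (B.repr (l i) b * r b) • c i := Finset.sum_comm
        _ = ∑ b ∈ S, r b • (∑ i, B.repr (l i) b • c i) := by
            refine Finset.sum_congr rfl fun b _ => ?_
            rw [Finset.smul_sum]
            exact Finset.sum_congr rfl fun i _ => by rw [mul_comm, mul_smul]
        _ = ∑ b ∈ S, r b • (B.repr 1 b • p) := by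
            refine Finset.sum_congr rfl fun b _ => ?_
            rw [key b]
        _ = μ • p := by
            rw [hμdef, Finset.sum_smul]
            exact Finset.sum_congr rfl fun b _ => by rw [mul_comm, mul_smul]
    have hpC : p ∈ C := by
      have hpe : p = ∑ i, (μ⁻¹ * q i) • c i := by
        have : μ⁻¹ • (∑ i, q i • c i) = μ⁻¹ • (μ • p) := by rw [hsum]
        rw [smul_smul, inv_mul_cancel₀ hμpos.ne', one_smul, Finset.smul_sum] at this
        rw [← this]
        exact Finset.sum_congr rfl fun i _ => by rw [smul_smul]
      rw [hpe]
      exact isCone_sum hC n c _ hcC fun i => mul_pos (inv_pos.2 hμpos) (hqpos i)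
    exact ⟨p, hpC, hp⟩
  · rintro v ⟨p, hpC, rfl⟩
    refine ⟨⟨0, fun _ => (1 : ℝ) ⊗ₜ[ℚ] p, fun _ => 1, fun _ => ⟨p, hpC, rfl⟩,
      fun _ => one_pos, by simp⟩, ⟨p, rfl⟩⟩
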